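/- Let θ be a real number with sin θ ≠ 0, and let H be the 4×4 real block-diagonal matrix Matrix.fromBlocks H_θ 0 0 H_θ. Then every 4×4 real matrix A satisfying (Matrix.fromBlocks H_{-θ} 0 0 H_{-θ}) * A = A * H has det A ≥ 0. In particular, no orientation-reversing linear map of ℝ⁴ can intertwine the rotation H with its inverse. -/

import Mathlib

open Matrix

/-- The 2×2 real rotation matrix by angle `α`. -/
noncomputable def Hrot (α : ℝ) : Matrix (Fin 2) (Fin 2) ℝ :=
  !![Real.cos α, -Real.sin α; Real.sin α, Real.cos α]

/-- Any 2×2 real matrix intertwining `Hrot θ` with `Hrot (-θ)` (for `sin θ ≠ 0`)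
has the "conjugate-linear" shape `!![a, b; b, -a]`. -/
lemma hrot_intertwine_key (θ : ℝ) (hθ : Real.sin θ ≠ 0) (M : Matrix (Fin 2) (Fin 2) ℝ)
    (h : Hrot (-θ) * M = M * Hrot θ) :
    M 1 0 = M 0 1 ∧ M 1 1 = - M 0 0 := by
  have h00 := congrFun (congrFun h 0) 0
  have h01 := congrFun (congrFun h 0) 1
  simp [Hrot, Matrix.mul_apply, Fin.sum_univ_succ, Real.cos_neg, Real.sin_neg] at h00 h01
  constructor
  · have : Real.sin θ * M 1 0 = Real.sin θ * M 0 1 := by nlinarith [h00]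
    exact mul_left_cancel₀ hθ this
  · have : Real.sin θ * M 1 1 = Real.sin θ * (- M 0 0) := by nlinarith [h01]
    exact mul_left_cancel₀ hθ this

/-- An explicit equivalence `Fin 4 ≃ Fin 2 ⊕ Fin 2`. -/
def e4 : Fin 4 ≃ (Fin 2 ⊕ Fin 2) where
  toFun := ![Sum.inl 0, Sum.inl 1, Sum.inr 0, Sum.inr 1]
  invFun := Sum.elim ![0, 1] ![2, 3]
  left_inv := by decide
  right_inv := by decide

theorem stmt_3 (θ : ℝ) (hθ : Real.sin θ ≠ 0)
    (A : Matrix (Fin 2 ⊕ Fin 2) (Fin 2 ⊕ Fin 2) ℝ)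
    (hA : Matrix.fromBlocks (Hrot (-θ)) 0 0 (Hrot (-θ)) * A
        = A * Matrix.fromBlocks (Hrot θ) 0 0 (Hrot θ)) :
    0 ≤ A.det := by
  rw [← Matrix.fromBlocks_toBlocks A] at hA
  rw [Matrix.fromBlocks_multiply, Matrix.fromBlocks_multiply] at hA
  simp only [Matrix.zero_mul, Matrix.mul_zero, add_zero, zero_add] at hA
  have h11 := hrot_intertwine_key θ hθ _ (congrArg Matrix.toBlocks₁₁ hA)
  have h12 := hrot_intertwine_key θ hθ _ (congrArg Matrix.toBlocks₁₂ hA)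
  have h21 := hrot_intertwine_key θ hθ _ (congrArg Matrix.toBlocks₂₁ hA)
  have h22 := hrot_intertwine_key θ hθ _ (congrArg Matrix.toBlocks₂₂ hA)
  simp only [Matrix.toBlocks₁₁, Matrix.toBlocks₁₂, Matrix.toBlocks₂₁, Matrix.toBlocks₂₂,
    Matrix.of_apply] at h11 h12 h21 h22
  have hd := Matrix.det_submatrix_equiv_self e4 A
  rw [← hd]
  rw [show (A.submatrix e4 e4).det =
      ((A (.inl 0) (.inl 0) * A (.inr 0) (.inr 0) - A (.inl 0) (.inl 1) * A (.inr 0) (.inr 1)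
        - (A (.inl 0) (.inr 0) * A (.inr 0) (.inl 0) - A (.inl 0) (.inr 1) * A (.inr 0) (.inl 1)))^2
      + (A (.inl 0) (.inl 0) * A (.inr 0) (.inr 1) + A (.inl 0) (.inl 1) * A (.inr 0) (.inr 0)
        - A (.inl 0) (.inr 0) * A (.inr 0) (.inl 1) - A (.inl 0) (.inr 1) * A (.inr 0) (.inl 0))^2) from by
    rw [Matrix.det_succ_row_zero]
    simp only [Fin.sum_univ_succ, Matrix.det_fin_three, Matrix.submatrix_apply]
    simp [Fin.succAbove, Fin.lt_def, Matrix.det_succ_row_zero, Fin.sum_univ_succ, e4, Matrix.submatrix_apply,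
      show ((1:Fin 4).succAbove 2) = 3 from by decide,
      show ((2:Fin 4).succAbove 2) = 3 from by decide,
      show (Fin.castSucc (2:Fin 3) : Fin 4) = 2 from by decide,
      h11.1, h11.2, h12.1, h12.2, h21.1, h21.2, h22.1, h22.2]
    ring]
  positivity
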